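/- If every point of Γ is a quasi-periodic point of φ (i.e. W(φ) = ∅), then the generalized shift dynamical system (X^Γ, σ_φ) is not sensitive: for every ε > 0 and every x ∈ X^Γ there exists an open neighborhood U of x such that D(σ_φ^n(x), σ_φ^n(y)) < ε for all y ∈ U and all n ≥ 0. -/
import Mathlib


open Filter Topology

open scoped Classical in
/-- The metric `D` on `X^Γ`, via a fixed bijection `e : ℕ ≃ Γ`. -/
noncomputable def gsD {X Γ : Type*} (e : ℕ ≃ Γ) (x y : Γ → X) : ℝ :=
  ∑' n : ℕ, (if x (e n) = y (e n) then (0 : ℝ) else 1) / 2 ^ (n + 1)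

/-- The generalized shift `σ_φ`. -/
def gshift {X Γ : Type*} (φ : Γ → Γ) : (Γ → X) → (Γ → X) := fun x => x ∘ φ

/-- `(x, y)` is a scrambled pair of `f` with respect to the distance function `d`. -/
def scrambledPair {Z : Type*} (d : Z → Z → ℝ) (f : Z → Z) (x y : Z) : Prop :=
  liminf (fun n : ℕ => d (f^[n] x) (f^[n] y)) atTop = 0 ∧
    0 < limsup (fun n : ℕ => d (f^[n] x) (f^[n] y)) atTop

lemma gshift_iterate {X Γ : Type*} (φ : Γ → Γ) (x : Γ → X) (n : ℕ) :
    (gshift φ)^[n] x = x ∘ (φ^[n]) := by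
  induction n with
  | zero => rfl
  | succ n ih =>
    rw [Function.iterate_succ_apply', ih, gshift, Function.iterate_succ]
    rfl

lemma orbit_mem {Γ : Type*} (φ : Γ → Γ) (a : Γ) {n m : ℕ} (hmn : m < n)
    (h : φ^[n] a = φ^[m] a) : ∀ k, ∃ j < n, φ^[k] a = φ^[j] a := by
  intro k
  induction k using Nat.strong_induction_on with
  | _ k ih =>
    rcases lt_or_ge k n with hk | hk
    · exact ⟨k, hk, rfl⟩
    · have h1 : φ^[k] a = φ^[k - n + m] a := by
        conv_lhs => rw [show k = (k - n) + n from (Nat.sub_add_cancel hk).symm]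
        rw [Function.iterate_add_apply, h, ← Function.iterate_add_apply]
      obtain ⟨j, hj, hj2⟩ := ih (k - n + m) (by omega)
      exact ⟨j, hj, h1.trans hj2⟩

open scoped Classical in
lemma gsD_le {X Γ : Type*} (e : ℕ ≃ Γ) (N : ℕ) (x y : Γ → X)
    (h : ∀ k < N, x (e k) = y (e k)) : gsD e x y ≤ (1/2 : ℝ)^N := by
  unfold gsD
  set f : ℕ → ℝ := fun n => (if x (e n) = y (e n) then (0 : ℝ) else 1) / 2 ^ (n + 1) with hf
  have hle : ∀ n, f n ≤ (1/2 : ℝ)^(n+1) := by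
    intro n
    simp only [hf, one_div, inv_pow]
    split <;> simp
  have hnn : ∀ n, 0 ≤ f n := by
    intro n
    simp only [hf]
    split <;> norm_num
  have hg0 : Summable (fun n : ℕ => ((1 : ℝ)/2)^n) :=
    summable_geometric_of_lt_one (by norm_num) (by norm_num)
  have hgsum : Summable (fun n : ℕ => (1/2 : ℝ)^(n + N + 1)) :=
    (hg0.mul_right ((1/2 : ℝ)^(N+1))).congr fun n => (pow_add _ n (N+1)).symm
  have hsum : Summable (fun n => f (n + N)) :=
    Summable.of_nonneg_of_le (fun n => hnn _) (fun n => hle _) hgsum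
  have hrange : Function.support f ⊆ Set.range (fun n : ℕ => n + N) := by
    intro k hk
    rcases lt_or_ge k N with hkN | hkN
    · exact absurd (by simp [hf, h k hkN]) hk
    · exact ⟨k - N, by simpa using Nat.sub_add_cancel hkN⟩
  have heq : ∑' n, f n = ∑' n, f (n + N) :=
    (Function.Injective.tsum_eq (fun a b hab => by simpa using hab) hrange).symm
  rw [heq]
  calc ∑' n, f (n + N) ≤ ∑' n : ℕ, (1/2 : ℝ)^(n + N + 1) :=
        Summable.tsum_le_tsum (fun n => hle _) hsum hgsum
    _ = (1/2 : ℝ)^N := by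
        simp_rw [pow_add, pow_one]
        rw [tsum_mul_right, tsum_mul_right, tsum_geometric_two]
        ring

/-- If every point of `Γ` is a quasi-periodic point of `φ`, then
`(X^Γ, σ_φ)` is not sensitive: for every `ε > 0` and every `x ∈ X^Γ` there exists an
open neighborhood `U` of `x` with `D(σ_φ^n x, σ_φ^n y) < ε` for all `y ∈ U`, `n ≥ 0`. -/
theorem stmt11 {X Γ : Type*} [TopologicalSpace X] [DiscreteTopology X] [Finite X]
    [Nontrivial X] [Countable Γ] [Infinite Γ] (e : ℕ ≃ Γ) (φ : Γ → Γ)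
    (hφ : ∀ a : Γ, ∃ n m : ℕ, 1 ≤ m ∧ m < n ∧ φ^[n] a = φ^[m] a) :
    ∀ ε > (0 : ℝ), ∀ x : Γ → X, ∃ U : Set (Γ → X), IsOpen U ∧ x ∈ U ∧
      ∀ y ∈ U, ∀ n : ℕ, gsD e ((gshift φ)^[n] x) ((gshift φ)^[n] y) < ε := by
  intro ε hε x
  obtain ⟨N, hN⟩ := exists_pow_lt_of_lt_one hε (by norm_num : (1/2 : ℝ) < 1)
  -- the full orbit of each of the first N coordinates
  have hFin : ∀ k : ℕ, ∃ nk : ℕ, ∀ j : ℕ, ∃ i < nk, φ^[j] (e k) = φ^[i] (e k) := by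
    intro k
    obtain ⟨n, m, _, hmn, h⟩ := hφ (e k)
    exact ⟨n, orbit_mem φ (e k) hmn h⟩
  choose nk hnk using hFin
  classical
  set F : Set Γ := ⋃ k ∈ Finset.range N, (fun i => φ^[i] (e k)) '' (Set.Iio (nk k)) with hF
  have hFfin : F.Finite := by
    apply Set.Finite.biUnion (Finset.range N).finite_toSet
    intro k _
    exact (Set.finite_Iio _).image _
  refine ⟨{y | ∀ γ ∈ F, y γ = x γ}, ?_, fun γ _ => rfl, ?_⟩
  · have : {y : Γ → X | ∀ γ ∈ F, y γ = x γ} = ⋂ γ ∈ F, (fun y : Γ → X => y γ) ⁻¹' {x γ} := by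
      ext y; simp
    rw [this]
    exact hFfin.isOpen_biInter (fun γ _ =>
      (continuous_apply γ).isOpen_preimage _ (isOpen_discrete _))
  · intro y hy n
    have hagree : ∀ k < N, ((gshift φ)^[n] x) (e k) = ((gshift φ)^[n] y) (e k) := by
      intro k hk
      rw [gshift_iterate, gshift_iterate]
      obtain ⟨i, hi, hieq⟩ := hnk k n
      have hmem : φ^[n] (e k) ∈ F := by
        rw [hF]
        refine Set.mem_biUnion (Finset.mem_range.mpr hk) ⟨i, hi, hieq.symm⟩
      exact (hy _ hmem).symm
    exact lt_of_le_of_lt (gsD_le e N _ _ hagree) hN
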